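/- Let $x, y, z$ be unit vectors in a complex inner product space such that $2|\langle x, z\rangle|^2 \ge 1$. Then $(2|\langle x,z\rangle|^2 - 1)(2|\langle y,z\rangle|^2 - 1) \le |\langle x,y\rangle|^2$. -/

import Mathlib

open scoped ComplexConjugate

lemma unit_vectors_inner_ineq_aux (a b c s t : ℝ) (ha : 0 ≤ a) (hb0 : 0 ≤ b)
    (hc0 : 0 ≤ c) (hs0 : 0 ≤ s) (ht0 : 0 ≤ t) (hs2 : s ^ 2 = 1 - b ^ 2)
    (ht2 : t ^ 2 = 1 - c ^ 2) (h : 1 ≤ 2 * b ^ 2) (hkey : b * c - a ≤ s * t) :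
    (2 * b ^ 2 - 1) * (2 * c ^ 2 - 1) ≤ a ^ 2 := by
  rcases le_or_gt (2 * c ^ 2) 1 with hcase | hcase
  · have hneg : (2 * b ^ 2 - 1) * (2 * c ^ 2 - 1) ≤ 0 :=
      mul_nonpos_of_nonneg_of_nonpos (by linarith) (by linarith)
    nlinarith
  · have hsq : (s * t) ^ 2 ≤ (b * c) ^ 2 := by nlinarith
    have hst : s * t ≤ b * c :=
      (pow_le_pow_iff_left₀ (mul_nonneg hs0 ht0) (mul_nonneg hb0 hc0)
        two_ne_zero).mp hsq
    have h0 : 0 ≤ b * c - s * t := by linarith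
    have ha2 : (b * c - s * t) ^ 2 ≤ a ^ 2 :=
      pow_le_pow_left₀ h0 (by linarith) 2
    have hst2 : (s * t) ^ 2 = (1 - b ^ 2) * (1 - c ^ 2) := by
      rw [mul_pow, hs2, ht2]
    have h1 : b ^ 2 * t ^ 2 = b ^ 2 * (1 - c ^ 2) := by rw [ht2]
    have h2 : c ^ 2 * s ^ 2 = c ^ 2 * (1 - b ^ 2) := by rw [hs2]
    nlinarith [ha2, sq_nonneg (b * t - c * s), hst2, h1, h2]

/-- For unit vectors `x, y, z` in a complex inner product space with
`2|⟨x,z⟩|² ≥ 1`, we have `(2|⟨x,z⟩|² - 1)(2|⟨y,z⟩|² - 1) ≤ |⟨x,y⟩|²`. -/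
theorem unit_vectors_inner_ineq {E : Type*} [NormedAddCommGroup E]
    [InnerProductSpace ℂ E] (x y z : E)
    (hx : ‖x‖ = 1) (hy : ‖y‖ = 1) (hz : ‖z‖ = 1)
    (h : 1 ≤ 2 * ‖(inner ℂ x z : ℂ)‖ ^ 2) :
    (2 * ‖(inner ℂ x z : ℂ)‖ ^ 2 - 1) * (2 * ‖(inner ℂ y z : ℂ)‖ ^ 2 - 1)
      ≤ ‖(inner ℂ x y : ℂ)‖ ^ 2 := by
  have hb1' : ‖(inner ℂ x z : ℂ)‖ ^ 2 ≤ 1 := by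
    have := norm_inner_le_norm (𝕜 := ℂ) x z
    rw [hx, hz] at this
    nlinarith [norm_nonneg (inner ℂ x z : ℂ)]
  have hc1' : ‖(inner ℂ y z : ℂ)‖ ^ 2 ≤ 1 := by
    have := norm_inner_le_norm (𝕜 := ℂ) y z
    rw [hy, hz] at this
    nlinarith [norm_nonneg (inner ℂ y z : ℂ)]
  set u := x - (inner ℂ z x : ℂ) • z with hudef
  set v := y - (inner ℂ z y : ℂ) • z with hvdef
  have hzz : (inner ℂ z z : ℂ) = 1 := by
    rw [inner_self_eq_norm_sq_to_K, hz]; norm_num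
  have hzx : (inner ℂ z x : ℂ) = conj (inner ℂ x z) := (inner_conj_symm z x).symm
  have hzy : (inner ℂ z y : ℂ) = conj (inner ℂ y z) := (inner_conj_symm z y).symm
  have huv : (inner ℂ u v : ℂ) = inner ℂ x y - inner ℂ x z * inner ℂ z y := by
    simp [hudef, hvdef, inner_sub_left, inner_sub_right, inner_smul_left,
      inner_smul_right, hzz, hz] <;> ring
  have hu2 : ‖u‖ ^ 2 = 1 - ‖(inner ℂ x z : ℂ)‖ ^ 2 := by
    rw [hudef, @norm_sub_sq ℂ, inner_smul_right, hx, norm_smul, hz, hzx]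
    simp only [Complex.sq_norm, Complex.normSq_apply,
      Complex.mul_re, Complex.conj_re, Complex.conj_im, norm_one, mul_one,
      RCLike.norm_conj, RCLike.re_to_complex]
    ring
  have hv2 : ‖v‖ ^ 2 = 1 - ‖(inner ℂ y z : ℂ)‖ ^ 2 := by
    rw [hvdef, @norm_sub_sq ℂ, inner_smul_right, hy, norm_smul, hz, hzy]
    simp only [Complex.sq_norm, Complex.normSq_apply,
      Complex.mul_re, Complex.conj_re, Complex.conj_im, norm_one, mul_one,
      RCLike.norm_conj, RCLike.re_to_complex]
    ring
  have hcs : ‖(inner ℂ u v : ℂ)‖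
      ≤ Real.sqrt (1 - ‖(inner ℂ x z : ℂ)‖ ^ 2) * Real.sqrt (1 - ‖(inner ℂ y z : ℂ)‖ ^ 2) := by
    have hle := norm_inner_le_norm (𝕜 := ℂ) u v
    have h1 : ‖u‖ = Real.sqrt (1 - ‖(inner ℂ x z : ℂ)‖ ^ 2) := by
      rw [← hu2, Real.sqrt_sq (norm_nonneg _)]
    have h2 : ‖v‖ = Real.sqrt (1 - ‖(inner ℂ y z : ℂ)‖ ^ 2) := by
      rw [← hv2, Real.sqrt_sq (norm_nonneg _)]
    rw [h1, h2] at hle; exact hle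
  have hkey : ‖(inner ℂ x z : ℂ)‖ * ‖(inner ℂ y z : ℂ)‖ - ‖(inner ℂ x y : ℂ)‖
      ≤ Real.sqrt (1 - ‖(inner ℂ x z : ℂ)‖ ^ 2) * Real.sqrt (1 - ‖(inner ℂ y z : ℂ)‖ ^ 2) := by
    have h1 : ‖(inner ℂ x z : ℂ)‖ * ‖(inner ℂ y z : ℂ)‖ = ‖(inner ℂ x z * inner ℂ z y : ℂ)‖ := by
      rw [norm_mul, norm_inner_symm z y]
    have h2 : ‖(inner ℂ x z * inner ℂ z y : ℂ)‖ - ‖(inner ℂ x y : ℂ)‖ ≤ ‖(inner ℂ u v : ℂ)‖ := by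
      rw [huv]
      calc ‖(inner ℂ x z * inner ℂ z y : ℂ)‖ - ‖(inner ℂ x y : ℂ)‖
          ≤ ‖(inner ℂ x z * inner ℂ z y : ℂ) - inner ℂ x y‖ := norm_sub_norm_le _ _
        _ = ‖(inner ℂ x y : ℂ) - inner ℂ x z * inner ℂ z y‖ := by rw [norm_sub_rev]
    rw [h1]
    linarith
  exact unit_vectors_inner_ineq_aux _ _ _ _ _ (norm_nonneg _) (norm_nonneg _)
    (norm_nonneg _) (Real.sqrt_nonneg _) (Real.sqrt_nonneg _)
    (Real.sq_sqrt (by linarith)) (Real.sq_sqrt (by linarith)) h hkey
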